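/- The function F(T) = ∫_0^T w_-(s) ds with λ = 1 has inverse F^{-1}(u) = (sin(πα)/tan(πα(1−u)) − cos(πα))^{1/α} for u ∈ (0,1). -/

import Mathlib

open Real MeasureTheory

noncomputable def wMinusOne (α s : ℝ) : ℝ :=
  (Real.sin (α * π) / π) *
    (s ^ (α - 1) / (s ^ (2 * α) + 2 * s ^ α * Real.cos (α * π) + 1))

lemma rpow_two_alpha {α x : ℝ} (hx : 0 ≤ x) : x ^ (2 * α) = (x ^ α) ^ 2 := by
  rw [mul_comm, Real.rpow_mul hx, Real.rpow_two]

lemma denom_lower {α : ℝ} {x : ℝ} (hx : 0 ≤ x) :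
    Real.sin (α * π) ^ 2 ≤ x ^ (2 * α) + 2 * x ^ α * Real.cos (α * π) + 1 := by
  rw [rpow_two_alpha hx]
  nlinarith [sq_nonneg (x ^ α + Real.cos (α * π)), Real.sin_sq_add_cos_sq (α * π)]

lemma denom_pos {α : ℝ} (hα : 0 < α) (hα1 : α < 1) {x : ℝ} (hx : 0 ≤ x) :
    0 < x ^ (2 * α) + 2 * x ^ α * Real.cos (α * π) + 1 := by
  have hπ := Real.pi_pos
  have hsn : 0 < Real.sin (α * π) :=
    Real.sin_pos_of_pos_of_lt_pi (by positivity) (by nlinarith)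
  calc (0:ℝ) < Real.sin (α * π) ^ 2 := by positivity
    _ ≤ _ := denom_lower hx

lemma integral_wMinusOne {α : ℝ} (hα : 0 < α) (hα1 : α < 1) {T : ℝ} (hT : 0 < T) :
    ∫ s in Set.Ioc (0 : ℝ) T, wMinusOne α s =
      (1 / (π * α)) * (Real.arctan ((T ^ α + Real.cos (α * π)) / Real.sin (α * π))
        - Real.arctan (Real.cos (α * π) / Real.sin (α * π))) := by
  have hπ := Real.pi_pos
  have hsn : 0 < Real.sin (α * π) :=
    Real.sin_pos_of_pos_of_lt_pi (by positivity) (by nlinarith)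
  set c := Real.cos (α * π) with hc
  set sn := Real.sin (α * π) with hsndef
  set G : ℝ → ℝ := fun s => (1 / (π * α)) * Real.arctan ((s ^ α + c) / sn) with hG
  have hrpow_cont : Continuous fun s : ℝ => s ^ α :=
    continuous_iff_continuousAt.mpr fun x => Real.continuousAt_rpow_const x α (Or.inr hα.le)
  have hGcont : Continuous G :=
    continuous_const.mul
      (Real.continuous_arctan.comp ((hrpow_cont.add continuous_const).div_const sn))
  have hderiv : ∀ x ∈ Set.Ioo (0:ℝ) T, HasDerivAt G (wMinusOne α x) x := by
    intro x hx
    have hx0 : 0 < x := hx.1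
    have h1 : HasDerivAt (fun s : ℝ => s ^ α) (α * x ^ (α - 1)) x :=
      Real.hasDerivAt_rpow_const (Or.inl hx0.ne')
    have h2 : HasDerivAt (fun s : ℝ => (s ^ α + c) / sn) (α * x ^ (α - 1) / sn) x :=
      (h1.add_const c).div_const sn
    have h3 : HasDerivAt (fun s : ℝ => Real.arctan ((s ^ α + c) / sn))
        ((1 / (1 + ((x ^ α + c) / sn) ^ 2)) * (α * x ^ (α - 1) / sn)) x :=
      by have := (Real.hasDerivAt_arctan ((x ^ α + c) / sn)).comp x h2; exact this
    have h4 := h3.const_mul (1 / (π * α))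
    refine h4.congr_deriv ?_
    have hD : 0 < x ^ (2 * α) + 2 * x ^ α * c + 1 := denom_pos hα hα1 hx0.le
    have hfrac : 1 + ((x ^ α + c) / sn) ^ 2
        = (x ^ (2 * α) + 2 * x ^ α * c + 1) / sn ^ 2 := by
      rw [rpow_two_alpha hx0.le]
      field_simp
      linear_combination Real.sin_sq_add_cos_sq (α * π)
    rw [wMinusOne, ← hc, ← hsndef, hfrac]
    field_simp
  have hint : IntervalIntegrable (wMinusOne α) volume 0 T := by
    have hbig : IntervalIntegrable (fun s : ℝ => (sn / (π * sn ^ 2)) * s ^ (α - 1)) volume 0 T :=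
      (intervalIntegral.intervalIntegrable_rpow' (by linarith : (-1:ℝ) < α - 1)).const_mul _
    refine hbig.mono_fun ?_ ?_
    · apply ContinuousOn.aestronglyMeasurable ?_ measurableSet_uIoc
      rw [Set.uIoc_of_le hT.le]
      intro x hx
      have hx0 : 0 < x := hx.1
      apply ContinuousAt.continuousWithinAt
      have h1 : ContinuousAt (fun s : ℝ => s ^ (α - 1)) x :=
        Real.continuousAt_rpow_const x _ (Or.inl hx0.ne')
      have h2 : ContinuousAt (fun s : ℝ => s ^ (2 * α)) x :=
        Real.continuousAt_rpow_const x _ (Or.inl hx0.ne')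
      have h3 : ContinuousAt (fun s : ℝ => s ^ α) x :=
        Real.continuousAt_rpow_const x _ (Or.inl hx0.ne')
      exact continuousAt_const.mul
        (h1.div ((h2.add ((continuousAt_const.mul h3).mul continuousAt_const)).add
          continuousAt_const) (denom_pos hα hα1 hx0.le).ne')
    · rw [Set.uIoc_of_le hT.le]
      refine (ae_restrict_iff' measurableSet_Ioc).mpr (Filter.Eventually.of_forall ?_)
      intro x hx
      have hx0 : 0 < x := hx.1
      have hD : 0 < x ^ (2 * α) + 2 * x ^ α * c + 1 := denom_pos hα hα1 hx0.le
      have he : (0:ℝ) ≤ x ^ (α - 1) := Real.rpow_nonneg hx0.le _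
      have hw : 0 ≤ wMinusOne α x := by
        rw [wMinusOne]; positivity
      have hb : (0:ℝ) ≤ sn / (π * sn ^ 2) * x ^ (α - 1) := by positivity
      show ‖wMinusOne α x‖ ≤ ‖sn / (π * sn ^ 2) * x ^ (α - 1)‖
      rw [Real.norm_eq_abs, Real.norm_eq_abs, abs_of_nonneg hw, abs_of_nonneg hb, wMinusOne]
      have hrw : sn / (π * sn ^ 2) * x ^ (α - 1) = sn / π * (x ^ (α - 1) / sn ^ 2) := by
        field_simp
      rw [hrw]
      gcongr
      exact denom_lower hx0.le
  rw [← intervalIntegral.integral_of_le hT.le,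
    intervalIntegral.integral_eq_sub_of_hasDeriv_right_of_le hT.le hGcont.continuousOn
      (fun x hx => (hderiv x hx).hasDerivWithinAt) hint]
  rw [hG]
  simp only [Real.zero_rpow hα.ne', zero_add]
  ring

theorem cdf_inverse {α : ℝ} (hα : 0 < α) (hα1 : α < 1) {u : ℝ} (hu : u ∈ Set.Ioo (0 : ℝ) 1) :
    (∫ s in Set.Ioc (0 : ℝ)
        ((Real.sin (π * α) / Real.tan (π * α * (1 - u)) - Real.cos (π * α)) ^ (1 / α)),
      wMinusOne α s) = u := by
  obtain ⟨hu0, hu1⟩ := hu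
  have hπ := Real.pi_pos
  have hπα : 0 < π * α := by positivity
  have hπα1 : π * α < π := by nlinarith
  have hsn : 0 < Real.sin (π * α) := Real.sin_pos_of_pos_of_lt_pi hπα hπα1
  set θ := π * α * (1 - u) with hθdef
  have hθ0 : 0 < θ := by
    have h1u : 0 < 1 - u := by linarith
    positivity
  have hθπα : θ < π * α := by nlinarith
  have hθπ : θ < π := hθπα.trans hπα1
  have hsθ : 0 < Real.sin θ := Real.sin_pos_of_pos_of_lt_pi hθ0 hθπ
  have hsu : 0 < Real.sin (π * α * u) :=
    Real.sin_pos_of_pos_of_lt_pi (by positivity) (by nlinarith)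
  have hbase : Real.sin (π * α) / Real.tan θ - Real.cos (π * α)
      = Real.sin (π * α * u) / Real.sin θ := by
    rw [Real.tan_eq_sin_div_cos, div_div_eq_mul_div,
        show π * α * u = π * α - θ by rw [hθdef]; ring, Real.sin_sub]
    field_simp
  set B := Real.sin (π * α * u) / Real.sin θ with hB
  have hB0 : 0 < B := div_pos hsu hsθ
  rw [hbase]
  have hT0 : 0 < B ^ (1 / α) := Real.rpow_pos_of_pos hB0 _
  have hTα : (B ^ (1 / α)) ^ α = B := by
    rw [← Real.rpow_mul hB0.le, one_div_mul_cancel hα.ne', Real.rpow_one]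
  rw [integral_wMinusOne hα hα1 hT0, hTα]
  have hmc : α * π = π * α := mul_comm α π
  have arct : ∀ φ : ℝ, 0 < φ → φ < π → Real.arctan (Real.cos φ / Real.sin φ) = π / 2 - φ := by
    intro φ h0 h1
    rw [show Real.cos φ / Real.sin φ = (Real.tan φ)⁻¹ by rw [Real.tan_eq_sin_div_cos, inv_div],
      ← Real.tan_pi_div_two_sub, Real.arctan_tan (by linarith) (by linarith)]
  have h1 : (B + Real.cos (α * π)) / Real.sin (α * π) = Real.cos θ / Real.sin θ := by
    rw [hmc, hB, show π * α * u = π * α - θ by rw [hθdef]; ring, Real.sin_sub]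
    field_simp
    ring
  rw [h1, arct θ hθ0 hθπ, hmc, arct _ hπα hπα1, hθdef]
  field_simp
  ring
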